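/- Let d ≥ 1, m ∈ ℝ^d, ε > 0, let p = N(m, εI_d), and let g : ℝ^d → ℝ^d be measurable with ∫ ‖g(x)‖² dp(x) < ∞. Define a* = ∫ g(x) dp(x) ∈ ℝ^d and s* = (1/(dε)) ∫ ⟨x − m, g(x)⟩ dp(x) ∈ ℝ. Then for all a ∈ ℝ^d and s ∈ ℝ: ∫ ‖a* + s*(x − m) − g(x)‖² dp(x) ≤ ∫ ‖a + s(x − m) − g(x)‖² dp(x); i.e. (a*, s*) realizes the L²(p)-projection of g onto the subspace { x ↦ a + s(x − m) : a ∈ ℝ^d, s ∈ ℝ }. -/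

import Mathlib

open MeasureTheory Real
open scoped RealInnerProductSpace
open scoped ENNReal NNReal

/-- Density of the isotropic Gaussian `N(m, ε I_d)` on `ℝ^d`. -/
noncomputable def gaussPDF (d : ℕ) (m : EuclideanSpace ℝ (Fin d)) (ε : ℝ)
    (x : EuclideanSpace ℝ (Fin d)) : ℝ :=
  (2 * Real.pi * ε) ^ (-(d : ℝ) / 2) * Real.exp (-‖x - m‖ ^ 2 / (2 * ε))

/-- The isotropic Gaussian measure `N(m, ε I_d)` on `ℝ^d`. -/
noncomputable def gaussMeasure (d : ℕ) (m : EuclideanSpace ℝ (Fin d)) (ε : ℝ) :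
    Measure (EuclideanSpace ℝ (Fin d)) :=
  volume.withDensity (fun x => ENNReal.ofReal (gaussPDF d m ε x))


lemma rpow_two_eq (x : ℝ) : x ^ (2:ℝ) = x ^ (2:ℕ) := by
  rw [show (2:ℝ) = ((2:ℕ):ℝ) by norm_num, Real.rpow_natCast]

lemma integrable_sq_mul_exp {b : ℝ} (hb : 0 < b) :
    Integrable (fun x : ℝ => x ^ 2 * Real.exp (-b * x ^ 2)) := by
  have h := integrable_rpow_mul_exp_neg_mul_sq hb (s := 2) (by norm_num)
  refine h.congr (Filter.Eventually.of_forall fun x => ?_)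
  simp [rpow_two_eq]

lemma integral_mul_exp_eq_zero {b : ℝ} : ∫ x : ℝ, x * Real.exp (-b * x ^ 2) = 0 := by
  have h := integral_neg_eq_self (fun x : ℝ => x * Real.exp (-b * x ^ 2)) volume
  simp only [neg_sq, ← neg_mul, neg_neg] at h
  rw [show (fun x : ℝ => -x * Real.exp (-b * x ^ 2))
      = fun x : ℝ => -(x * Real.exp (-b * x ^ 2)) from funext fun x => by ring,
    integral_neg] at h
  linarith

lemma integral_sq_mul_exp {b : ℝ} (hb : 0 < b) :
    ∫ x : ℝ, x ^ 2 * Real.exp (-b * x ^ 2) = 1 / (2 * b) * √(π / b) := by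
  have h1 : ∫ x : ℝ, x ^ 2 * Real.exp (-b * x ^ 2)
      = 2 * ∫ x in Set.Ioi (0:ℝ), x ^ 2 * Real.exp (-b * x ^ 2) := by
    rw [← integral_comp_abs (f := fun x => x ^ 2 * Real.exp (-b * x ^ 2))]
    simp [sq_abs]
  have h2 : ∫ x in Set.Ioi (0:ℝ), x ^ 2 * Real.exp (-b * x ^ 2)
      = b ^ (-(2 + 1) / 2 : ℝ) * (1 / 2) * Gamma ((2 + 1) / 2) := by
    rw [← integral_rpow_mul_exp_neg_mul_rpow (by norm_num) (by norm_num : (-1:ℝ) < 2) hb]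
    refine setIntegral_congr_fun measurableSet_Ioi (fun x hx => ?_)
    simp [rpow_two_eq]
  have h3 : Gamma ((2 + 1) / 2 : ℝ) = √π / 2 := by
    rw [show ((2 + 1) / 2 : ℝ) = 1 / 2 + 1 by norm_num,
      Real.Gamma_add_one (by norm_num), Real.Gamma_one_half_eq]
    ring
  have hsb : (0:ℝ) < √b := Real.sqrt_pos.2 hb
  have hsq : √b * √b = b := Real.mul_self_sqrt hb.le
  have h4 : b ^ (-(2 + 1) / 2 : ℝ) = (b * √b)⁻¹ := by
    rw [show (-(2 + 1) / 2 : ℝ) = -(1 + 1/2) by norm_num, Real.rpow_neg hb.le,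
      Real.rpow_add hb, Real.rpow_one, ← Real.sqrt_eq_rpow]
  have h5 : √(π / b) = √π / √b := Real.sqrt_div' π hb.le ▸ by rw [Real.sqrt_div pi_pos.le]
  rw [h1, h2, h3, h4, h5]
  field_simp

lemma pi_single_aux {d : ℕ} {b : ℝ} (hb : 0 < b) (i : Fin d) (φ : ℝ → ℝ)
    (hφ : Integrable (fun t : ℝ => φ t * Real.exp (-b * t ^ 2)) volume) :
    Integrable (fun y : Fin d → ℝ => φ (y i) * ∏ j, Real.exp (-b * (y j) ^ 2)) volume ∧
    ∫ y : Fin d → ℝ, φ (y i) * ∏ j, Real.exp (-b * (y j) ^ 2)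
      = (∫ t : ℝ, φ t * Real.exp (-b * t ^ 2)) * (√(π / b)) ^ (d - 1) := by
  classical
  set f : Fin d → ℝ → ℝ := fun j =>
    if j = i then (fun t => φ t * Real.exp (-b * t ^ 2)) else (fun t => Real.exp (-b * t ^ 2))
    with hf
  have hpt : (fun y : Fin d → ℝ => φ (y i) * ∏ j, Real.exp (-b * (y j) ^ 2))
      = fun y => ∏ j, f j (y j) := by
    funext y
    rw [← Finset.mul_prod_erase Finset.univ (fun j => Real.exp (-b * (y j) ^ 2))
        (Finset.mem_univ i),
      ← Finset.mul_prod_erase Finset.univ (fun j => f j (y j)) (Finset.mem_univ i), ← mul_assoc]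
    congr 1
    · simp [hf]
    · exact Finset.prod_congr rfl fun j hj => by simp [hf, Finset.ne_of_mem_erase hj]
  have hint : ∀ j, Integrable (f j) volume := by
    intro j
    by_cases h : j = i
    · simpa [hf, h] using hφ
    · simpa [hf, h] using integrable_exp_neg_mul_sq hb
  constructor
  · rw [hpt]; exact Integrable.fintype_prod hint
  · rw [hpt, integral_fintype_prod_volume_eq_prod f,
      ← Finset.mul_prod_erase Finset.univ (fun j => ∫ t : ℝ, f j t) (Finset.mem_univ i)]
    congr 1
    · simp [hf]
    · rw [Finset.prod_congr rfl (fun j hj => by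
        simp only [hf, Finset.ne_of_mem_erase hj, if_false]
        exact integral_gaussian b), Finset.prod_const, Finset.card_erase_of_mem
          (Finset.mem_univ i), Finset.card_univ, Fintype.card_fin]

lemma euclid_norm_sq {d : ℕ} (y : Fin d → ℝ) :
    ‖(MeasurableEquiv.toLp 2 (Fin d → ℝ)) y‖ ^ 2 = ∑ j, (y j) ^ 2 := by
  rw [EuclideanSpace.norm_eq, Real.sq_sqrt (Finset.sum_nonneg fun j _ => by positivity)]
  exact Finset.sum_congr rfl fun j _ => by simp [sq_abs]

lemma exp_neg_sum_eq {d : ℕ} (b : ℝ) (y : Fin d → ℝ) :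
    Real.exp (-b * ∑ j, (y j) ^ 2) = ∏ j, Real.exp (-b * (y j) ^ 2) := by
  rw [← Real.exp_sum, ← Finset.mul_sum]

lemma euclid_integral_eq {d : ℕ} (f : EuclideanSpace ℝ (Fin d) → ℝ) :
    ∫ x, f x = ∫ y : Fin d → ℝ, f ((MeasurableEquiv.toLp 2 (Fin d → ℝ)) y) :=
  (((EuclideanSpace.volume_preserving_symm_measurableEquiv_toLp (Fin d)).symm
    (MeasurableEquiv.toLp 2 (Fin d → ℝ)).symm).integral_comp' f).symm

lemma euclid_integrable_iff {d : ℕ} (f : EuclideanSpace ℝ (Fin d) → ℝ) :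
    Integrable f ↔
      Integrable (fun y : Fin d → ℝ => f ((MeasurableEquiv.toLp 2 (Fin d → ℝ)) y)) :=
  (((EuclideanSpace.volume_preserving_symm_measurableEquiv_toLp (Fin d)).symm
    (MeasurableEquiv.toLp 2 (Fin d → ℝ)).symm).integrable_comp_emb
    (MeasurableEquiv.measurableEmbedding _)).symm

section euclid
variable {d : ℕ} {b : ℝ}

lemma euclid_transport (f : EuclideanSpace ℝ (Fin d) → ℝ) (φ : (Fin d → ℝ) → ℝ)
    (h : ∀ y : Fin d → ℝ, f ((MeasurableEquiv.toLp 2 (Fin d → ℝ)) y) = φ y) :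
    (∫ x, f x = ∫ y, φ y) ∧ (Integrable f ↔ Integrable φ) := by
  constructor
  · rw [euclid_integral_eq f]; exact integral_congr_ae (Filter.Eventually.of_forall h)
  · rw [euclid_integrable_iff f]
    exact integrable_congr (Filter.Eventually.of_forall h)

lemma euclid_exp_transport (hb : 0 < b) :
    (∫ v : EuclideanSpace ℝ (Fin d), Real.exp (-b * ‖v‖ ^ 2)
        = (π / b) ^ ((d : ℝ) / 2)) ∧
      Integrable (fun v : EuclideanSpace ℝ (Fin d) => Real.exp (-b * ‖v‖ ^ 2)) := by
  constructor
  · rw [GaussianFourier.integral_rexp_neg_mul_sq_norm hb, finrank_euclideanSpace_fin]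
  · classical
    have h := euclid_transport (d := d) (fun v => Real.exp (-b * ‖v‖ ^ 2))
      (fun y => ∏ j, Real.exp (-b * (y j) ^ 2))
      (fun y => by rw [euclid_norm_sq, exp_neg_sum_eq])
    exact h.2.mpr (Integrable.fintype_prod fun _ => integrable_exp_neg_mul_sq hb)

lemma euclid_moment2 (hb : 0 < b) :
    (∫ v : EuclideanSpace ℝ (Fin d), ‖v‖ ^ 2 * Real.exp (-b * ‖v‖ ^ 2)
        = (d : ℝ) * (1 / (2 * b) * √(π / b) * (√(π / b)) ^ (d - 1))) ∧
      Integrable (fun v : EuclideanSpace ℝ (Fin d) => ‖v‖ ^ 2 * Real.exp (-b * ‖v‖ ^ 2)) := by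
  classical
  have hsingle := fun i : Fin d => pi_single_aux hb i (fun t => t ^ 2) (integrable_sq_mul_exp hb)
  have h := euclid_transport (d := d) (fun v => ‖v‖ ^ 2 * Real.exp (-b * ‖v‖ ^ 2))
    (fun y => ∑ i, (y i) ^ 2 * ∏ j, Real.exp (-b * (y j) ^ 2))
    (fun y => by rw [euclid_norm_sq, exp_neg_sum_eq, Finset.sum_mul])
  constructor
  · rw [h.1, integral_finset_sum _ (fun i _ => (hsingle i).1)]
    rw [Finset.sum_congr rfl fun i _ => (hsingle i).2, Finset.sum_const, Finset.card_univ,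
      Fintype.card_fin, nsmul_eq_mul, integral_sq_mul_exp hb]
  · exact h.2.mpr (integrable_finset_sum _ fun i _ => (hsingle i).1)

lemma euclid_coord_zero (hb : 0 < b) (i : Fin d) :
    ∫ v : EuclideanSpace ℝ (Fin d), v i * Real.exp (-b * ‖v‖ ^ 2) = 0 := by
  classical
  have hsingle := pi_single_aux hb i (fun t => t) (integrable_mul_exp_neg_mul_sq hb)
  have h := euclid_transport (d := d) (fun v => v i * Real.exp (-b * ‖v‖ ^ 2))
    (fun y => y i * ∏ j, Real.exp (-b * (y j) ^ 2))
    (fun y => by dsimp only; rw [euclid_norm_sq, exp_neg_sum_eq]; rfl)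
  rw [h.1, hsingle.2, integral_mul_exp_eq_zero, zero_mul]

end euclid

section gauss
variable {d : ℕ} {m : EuclideanSpace ℝ (Fin d)} {ε : ℝ}

lemma gaussPDF_eq (hε : 0 < ε) (x : EuclideanSpace ℝ (Fin d)) :
    gaussPDF d m ε x
      = (2 * π * ε) ^ (-(d : ℝ) / 2) * Real.exp (-(2 * ε)⁻¹ * ‖x - m‖ ^ 2) := by
  unfold gaussPDF
  congr 1
  rw [div_eq_mul_inv, neg_mul, mul_comm, ← neg_mul]

lemma gaussPDF_nonneg (hε : 0 < ε) (x : EuclideanSpace ℝ (Fin d)) : 0 ≤ gaussPDF d m ε x :=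
  mul_nonneg (Real.rpow_nonneg (by positivity) _) (Real.exp_pos _).le

lemma gaussPDF_continuous : Continuous (gaussPDF d m ε) := by
  unfold gaussPDF
  fun_prop

lemma integral_gauss {F : Type*} [NormedAddCommGroup F] [NormedSpace ℝ F]
    (hε : 0 < ε) (f : EuclideanSpace ℝ (Fin d) → F) :
    ∫ x, f x ∂gaussMeasure d m ε = ∫ x, gaussPDF d m ε x • f x := by
  rw [gaussMeasure]
  rw [show (fun x => ENNReal.ofReal (gaussPDF d m ε x))
      = (fun x => ((fun x => (gaussPDF d m ε x).toNNReal) x : ℝ≥0∞)) from rfl,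
    integral_withDensity_eq_integral_smul (gaussPDF_continuous.measurable.real_toNNReal) f]
  exact integral_congr_ae (Filter.Eventually.of_forall fun x => by
    dsimp only
    rw [NNReal.smul_def, Real.coe_toNNReal _ (gaussPDF_nonneg hε x)])

lemma integrable_gauss_iff {F : Type*} [NormedAddCommGroup F] [NormedSpace ℝ F]
    (hε : 0 < ε) (f : EuclideanSpace ℝ (Fin d) → F) :
    Integrable f (gaussMeasure d m ε)
      ↔ Integrable (fun x => gaussPDF d m ε x • f x) volume := by
  rw [gaussMeasure]
  rw [show (fun x => ENNReal.ofReal (gaussPDF d m ε x))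
      = (fun x => ((fun x => (gaussPDF d m ε x).toNNReal) x : ℝ≥0∞)) from rfl,
    integrable_withDensity_iff_integrable_smul (gaussPDF_continuous.measurable.real_toNNReal)]
  exact integrable_congr (Filter.Eventually.of_forall fun x => by
    dsimp only
    rw [NNReal.smul_def, Real.coe_toNNReal _ (gaussPDF_nonneg hε x)])

lemma key_transform (hε : 0 < ε) (F : EuclideanSpace ℝ (Fin d) → ℝ) :
    ∫ x, gaussPDF d m ε x * F (x - m) =
      (2 * π * ε) ^ (-(d : ℝ) / 2)
        * ∫ y, Real.exp (-(2 * ε)⁻¹ * ‖y‖ ^ 2) * F y := by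
  simp_rw [gaussPDF_eq hε, mul_assoc]
  rw [integral_const_mul]
  congr 1
  exact integral_sub_right_eq_self (fun y => Real.exp (-(2 * ε)⁻¹ * ‖y‖ ^ 2) * F y) m

lemma key_integrable (hε : 0 < ε) (F : EuclideanSpace ℝ (Fin d) → ℝ)
    (h : Integrable (fun y => Real.exp (-(2 * ε)⁻¹ * ‖y‖ ^ 2) * F y)) :
    Integrable (fun x => gaussPDF d m ε x * F (x - m)) := by
  simp_rw [gaussPDF_eq hε, mul_assoc]
  exact (h.comp_sub_right m).const_mul _

lemma KG_eq (hε : 0 < ε) (hd : 1 ≤ d) :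
    (2 * π * ε) ^ (-(d : ℝ) / 2) * (π / (2 * ε)⁻¹) ^ ((d : ℝ) / 2) = 1 := by
  have h2 : π / (2 * ε)⁻¹ = 2 * π * ε := by field_simp
  rw [h2, ← Real.rpow_add (by positivity), neg_div, neg_add_cancel, Real.rpow_zero]

lemma gauss_prob (hε : 0 < ε) (hd : 1 ≤ d) :
    IsProbabilityMeasure (gaussMeasure d m ε) := by
  have hb : (0:ℝ) < (2 * ε)⁻¹ := by positivity
  have hint : Integrable (fun x => gaussPDF d m ε x) volume := by
    have := key_integrable (m := m) hε (fun _ => 1)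
      (by simpa using (euclid_exp_transport (d := d) hb).2)
    simpa using this
  constructor
  rw [gaussMeasure, withDensity_apply _ MeasurableSet.univ, Measure.restrict_univ,
    ← ofReal_integral_eq_lintegral_ofReal hint
      (Filter.Eventually.of_forall fun x => gaussPDF_nonneg hε x)]
  have : ∫ x, gaussPDF d m ε x = ∫ x, gaussPDF d m ε x * (fun _ => 1) (x - m) := by
    simp
  rw [this, key_transform hε (fun _ => (1:ℝ))]
  simp only [mul_one]
  rw [(euclid_exp_transport (d := d) hb).1, KG_eq hε hd]
  simp

lemma gauss_sq_integrable (hε : 0 < ε) :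
    Integrable (fun x => ‖x - m‖ ^ 2) (gaussMeasure d m ε) := by
  have hb : (0:ℝ) < (2 * ε)⁻¹ := by positivity
  rw [integrable_gauss_iff hε]
  simp only [smul_eq_mul]
  exact key_integrable hε (fun y => ‖y‖ ^ 2)
    (((euclid_moment2 (d := d) hb).2).congr
      (Filter.Eventually.of_forall fun v => mul_comm _ _))

lemma gauss_moment2_val (hε : 0 < ε) (hd : 1 ≤ d) :
    ∫ x, ‖x - m‖ ^ 2 ∂gaussMeasure d m ε = d * ε := by
  have hb : (0:ℝ) < (2 * ε)⁻¹ := by positivity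
  have hπb : (0:ℝ) ≤ π / (2 * ε)⁻¹ := by positivity
  rw [integral_gauss hε]
  simp only [smul_eq_mul]
  rw [key_transform hε (fun y => ‖y‖ ^ 2)]
  have hcomm : ∫ y : EuclideanSpace ℝ (Fin d), Real.exp (-(2 * ε)⁻¹ * ‖y‖ ^ 2) * ‖y‖ ^ 2
      = ∫ y : EuclideanSpace ℝ (Fin d), ‖y‖ ^ 2 * Real.exp (-(2 * ε)⁻¹ * ‖y‖ ^ 2) :=
    integral_congr_ae (Filter.Eventually.of_forall fun y => mul_comm _ _)
  rw [hcomm, (euclid_moment2 (d := d) hb).1]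
  have hpow : √(π / (2 * ε)⁻¹) * (√(π / (2 * ε)⁻¹)) ^ (d - 1)
      = (π / (2 * ε)⁻¹) ^ ((d : ℝ) / 2) := by
    rw [← pow_succ', show d - 1 + 1 = d from by omega, Real.sqrt_eq_rpow,
      ← Real.rpow_natCast ((π / (2 * ε)⁻¹) ^ ((1:ℝ)/2)) d, ← Real.rpow_mul hπb]
    congr 1
    ring
  rw [mul_assoc (1 / (2 * (2 * ε)⁻¹)), hpow]
  have : (2 * π * ε) ^ (-(d : ℝ) / 2)
        * ((d : ℝ) * (1 / (2 * (2 * ε)⁻¹) * (π / (2 * ε)⁻¹) ^ ((d : ℝ) / 2)))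
      = (d : ℝ) * (1 / (2 * (2 * ε)⁻¹))
        * ((2 * π * ε) ^ (-(d : ℝ) / 2) * (π / (2 * ε)⁻¹) ^ ((d : ℝ) / 2)) := by ring
  rw [this, KG_eq hε hd, mul_one]
  have h2 : 1 / (2 * (2 * ε)⁻¹) = ε := by field_simp
  rw [h2]

lemma gauss_coord_zero (hε : 0 < ε) (i : Fin d) :
    ∫ x, ((x : EuclideanSpace ℝ (Fin d)) i - m i) ∂gaussMeasure d m ε = 0 := by
  have hb : (0:ℝ) < (2 * ε)⁻¹ := by positivity
  rw [integral_gauss hε]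
  simp only [smul_eq_mul]
  have hrfl : (fun x : EuclideanSpace ℝ (Fin d) => gaussPDF d m ε x * (x i - m i))
      = fun x => gaussPDF d m ε x * (fun y : EuclideanSpace ℝ (Fin d) => y i) (x - m) := rfl
  rw [hrfl, key_transform hε (fun y : EuclideanSpace ℝ (Fin d) => y i)]
  have hcomm : ∫ y : EuclideanSpace ℝ (Fin d), Real.exp (-(2 * ε)⁻¹ * ‖y‖ ^ 2) * y i
      = ∫ y : EuclideanSpace ℝ (Fin d), y i * Real.exp (-(2 * ε)⁻¹ * ‖y‖ ^ 2) :=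
    integral_congr_ae (Filter.Eventually.of_forall fun y => mul_comm _ _)
  rw [hcomm, euclid_coord_zero hb i, mul_zero]

lemma gauss_sub_integrable (hε : 0 < ε) :
    Integrable (fun x => x - m) (gaussMeasure d m ε) := by
  have hb : (0:ℝ) < (2 * ε)⁻¹ := by positivity
  rw [integrable_gauss_iff hε]
  have hbound : Integrable
      (fun x : EuclideanSpace ℝ (Fin d) => gaussPDF d m ε x * (1 + ‖x - m‖ ^ 2)) volume := by
    refine key_integrable hε (fun y => 1 + ‖y‖ ^ 2) ?_
    have h1 := (euclid_exp_transport (d := d) hb).2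
    have h2 := ((euclid_moment2 (d := d) hb).2).congr
      (Filter.Eventually.of_forall fun v => mul_comm _ _)
    exact (h1.add h2).congr (Filter.Eventually.of_forall fun y => by simp only [Pi.add_apply]; rw [mul_add, mul_one])
  refine Integrable.mono' hbound ?_ (Filter.Eventually.of_forall fun x => ?_)
  · exact (gaussPDF_continuous.smul (continuous_id.sub continuous_const)).aestronglyMeasurable
  · rw [norm_smul, Real.norm_eq_abs, abs_of_nonneg (gaussPDF_nonneg hε x)]
    refine mul_le_mul_of_nonneg_left ?_ (gaussPDF_nonneg hε x)
    nlinarith [sq_nonneg (‖x - m‖ - 1), norm_nonneg (x - m)]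

lemma gauss_moment1 (hε : 0 < ε) :
    ∫ x, (x - m) ∂gaussMeasure d m ε = 0 := by
  have hint := gauss_sub_integrable (m := m) hε
  ext i
  have h := (EuclideanSpace.proj (𝕜 := ℝ) i).integral_comp_comm hint
  have h2 : ∫ x, ((x : EuclideanSpace ℝ (Fin d)) i - m i) ∂gaussMeasure d m ε
      = (∫ x, (x - m) ∂gaussMeasure d m ε) i := h
  rw [gauss_coord_zero hε i] at h2
  exact h2.symm

end gauss


/-- `(a*, s*)` with `a* = E_p[g]` and `s* = (1/(dε)) E_p[⟨x − m, g(x)⟩]` realizes the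
`L²(p)`-projection of `g` onto the tangent space `{x ↦ a + s(x − m)}` of the isotropic
Bures–Wasserstein manifold at `p = N(m, εI_d)`. -/
theorem ibw_tangent_projection
    (d : ℕ) (hd : 1 ≤ d) (m : EuclideanSpace ℝ (Fin d)) (ε : ℝ) (hε : 0 < ε)
    (g : EuclideanSpace ℝ (Fin d) → EuclideanSpace ℝ (Fin d))
    (hmeas : Measurable g)
    (hL2 : Integrable (fun x => ‖g x‖ ^ 2) (gaussMeasure d m ε))
    (astar : EuclideanSpace ℝ (Fin d)) (hastar : astar = ∫ x, g x ∂gaussMeasure d m ε)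
    (sstar : ℝ)
    (hsstar : sstar = (1 / ((d : ℝ) * ε)) * ∫ x, ⟪x - m, g x⟫ ∂gaussMeasure d m ε) :
    ∀ (a : EuclideanSpace ℝ (Fin d)) (s : ℝ),
      (∫ x, ‖astar + sstar • (x - m) - g x‖ ^ 2 ∂gaussMeasure d m ε) ≤
        ∫ x, ‖a + s • (x - m) - g x‖ ^ 2 ∂gaussMeasure d m ε := by
  haveI : IsProbabilityMeasure (gaussMeasure d m ε) := gauss_prob hε hd
  set p := gaussMeasure d m ε with hp
  have hdε : (0:ℝ) < (d : ℝ) * ε := by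
    have : (1:ℝ) ≤ (d:ℝ) := by exact_mod_cast hd
    nlinarith
  have i1 : Integrable (fun x => ‖x - m‖ ^ 2) p := gauss_sq_integrable hε
  have i3 : Integrable (fun x => x - m) p := gauss_sub_integrable hε
  have i2 : Integrable g p := by
    refine Integrable.mono' ((integrable_const (1:ℝ)).add hL2) hmeas.aestronglyMeasurable
      (Filter.Eventually.of_forall fun x => ?_)
    simp only [Pi.add_apply]
    nlinarith [sq_nonneg (‖g x‖ - 1), norm_nonneg (g x)]
  have i4 : Integrable (fun x => ⟪x - m, g x⟫) p := by
    refine Integrable.mono' (i1.add hL2)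
      (((measurable_id.sub_const m).inner hmeas).aestronglyMeasurable)
      (Filter.Eventually.of_forall fun x => ?_)
    have h1 := abs_real_inner_le_norm (x - m) (g x)
    have h2 : ‖⟪x - m, g x⟫‖ = |⟪x - m, g x⟫| := rfl
    simp only [Pi.add_apply]
    nlinarith [norm_nonneg (x - m), norm_nonneg (g x), sq_nonneg (‖x - m‖ - ‖g x‖)]
  have M2 : ∫ x, ‖x - m‖ ^ 2 ∂p = d * ε := gauss_moment2_val hε hd
  have M1 : ∫ x, (x - m) ∂p = 0 := gauss_moment1 hε
  have hA : ∀ c : EuclideanSpace ℝ (Fin d), ∫ x, ⟪c, x - m⟫ ∂p = 0 := fun c => by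
    rw [integral_inner i3 c, M1, inner_zero_right]
  have hGc : ∀ c : EuclideanSpace ℝ (Fin d), ∫ x, ⟪c, g x⟫ ∂p = ⟪c, astar⟫ := fun c => by
    rw [integral_inner i2 c, ← hastar]
  set C := ∫ x, ‖g x‖ ^ 2 ∂p with hC
  set B := ∫ x, ⟪x - m, g x⟫ ∂p with hB
  have key : ∀ (a : EuclideanSpace ℝ (Fin d)) (s : ℝ) (u v : EuclideanSpace ℝ (Fin d)),
      ‖a + s • u - v‖ ^ 2 = ‖a‖ ^ 2 + s ^ 2 * ‖u‖ ^ 2 + ‖v‖ ^ 2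
        + 2 * s * ⟪a, u⟫ - 2 * ⟪a, v⟫ - 2 * s * ⟪u, v⟫ := by
    intro a s u v
    simp only [← real_inner_self_eq_norm_sq, inner_sub_left, inner_sub_right, inner_add_left,
      inner_add_right, real_inner_smul_left, real_inner_smul_right]
    rw [real_inner_comm v a, real_inner_comm v u, real_inner_comm u a]
    ring
  have expand : ∀ (a : EuclideanSpace ℝ (Fin d)) (s : ℝ),
      ∫ x, ‖a + s • (x - m) - g x‖ ^ 2 ∂p
        = ‖a‖ ^ 2 + s ^ 2 * ((d : ℝ) * ε) + C - 2 * ⟪a, astar⟫ - 2 * s * B := by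
    intro a s
    have hptw : (fun x => ‖a + s • (x - m) - g x‖ ^ 2)
        = fun x => ‖a‖ ^ 2 + s ^ 2 * ‖x - m‖ ^ 2 + ‖g x‖ ^ 2
          + 2 * s * ⟪a, x - m⟫ - 2 * ⟪a, g x⟫ - 2 * s * ⟪x - m, g x⟫ :=
      funext fun x => key a s _ _
    have J1 : Integrable (fun _ : EuclideanSpace ℝ (Fin d) => ‖a‖ ^ 2) p := integrable_const _
    have J2 : Integrable (fun x => s ^ 2 * ‖x - m‖ ^ 2) p := i1.const_mul _
    have J4 : Integrable (fun x => 2 * s * ⟪a, x - m⟫) p := (i3.const_inner a).const_mul _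
    have J5 : Integrable (fun x => 2 * ⟪a, g x⟫) p := (i2.const_inner a).const_mul _
    have J6 : Integrable (fun x => 2 * s * ⟪x - m, g x⟫) p := i4.const_mul _
    have K1 : Integrable (fun x => ‖a‖ ^ 2 + s ^ 2 * ‖x - m‖ ^ 2) p := J1.add J2
    have K2 : Integrable (fun x => ‖a‖ ^ 2 + s ^ 2 * ‖x - m‖ ^ 2 + ‖g x‖ ^ 2) p := K1.add hL2
    have K3 : Integrable (fun x => ‖a‖ ^ 2 + s ^ 2 * ‖x - m‖ ^ 2 + ‖g x‖ ^ 2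
        + 2 * s * ⟪a, x - m⟫) p := K2.add J4
    have K4 : Integrable (fun x => ‖a‖ ^ 2 + s ^ 2 * ‖x - m‖ ^ 2 + ‖g x‖ ^ 2
        + 2 * s * ⟪a, x - m⟫ - 2 * ⟪a, g x⟫) p := K3.sub J5
    rw [hptw, integral_sub K4 J6, integral_sub K3 J5,
      integral_add K2 J4, integral_add K1 hL2,
      integral_add J1 J2, integral_const, integral_const_mul, integral_const_mul,
      integral_const_mul, integral_const_mul, M2, hA a, hGc a, ← hB, ← hC]
    simp [measure_univ]
  intro a s
  have hBval : B = sstar * ((d : ℝ) * ε) := by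
    rw [hsstar, mul_comm (1 / ((d : ℝ) * ε)) B, mul_assoc, one_div,
      inv_mul_cancel₀ hdε.ne', mul_one]
  rw [expand a s, expand astar sstar, hBval, real_inner_self_eq_norm_sq]
  nlinarith [norm_sub_sq_real a astar, sq_nonneg ‖a - astar‖,
    mul_nonneg hdε.le (sq_nonneg (s - sstar))]
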